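/- arXiv:1901.10864 — 2 statements merged into one kernel-verified Lean document; each statement's English description precedes it below -/
import Mathlib

section
/- (Exponential mechanism.) Let (Y, F, ν) be a measure space, let ε > 0, and let {ξ_X : Y → ℝ | X ∈ X^n} be a collection of measurable functions with finite sensitivity Δ_ξ > 0, i.e., |ξ_X(b) − ξ_{X'}(b)| ≤ Δ_ξ for all adjacent X, X' and ν-almost every b ∈ Y. Assume that for every X ∈ X^n the normalizing constant c_X = ∫_Y exp((ε/(2Δ_ξ)) ξ_X(b)) dν(b) is finite and strictly positive. Then the family of probability measures {μ_X : X ∈ X^n} defined by μ_X(B) = c_X^{-1} ∫_B exp((ε/(2Δ_ξ)) ξ_X(b)) dν(b) satisfies ε-differential privacy. -/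
open MeasureTheory
open scoped ENNReal

/-- Pointwise a.e. comparison of the densities under a sensitivity bound. -/
lemma exp_density_le {Y : Type*} [MeasurableSpace Y] (ν : Measure Y) (ε Δ : ℝ)
    (hε : 0 < ε) (hΔ : 0 < Δ) (f g : Y → ℝ)
    (h : ∀ᵐ b ∂ν, |f b - g b| ≤ Δ) :
    ∀ᵐ b ∂ν, ENNReal.ofReal (Real.exp (ε / (2 * Δ) * f b)) ≤
      ENNReal.ofReal (Real.exp (ε / 2)) * ENNReal.ofReal (Real.exp (ε / (2 * Δ) * g b)) := by
  filter_upwards [h] with b hb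
  rw [← ENNReal.ofReal_mul (Real.exp_pos _).le, ← Real.exp_add]
  apply ENNReal.ofReal_le_ofReal
  apply Real.exp_le_exp.2
  have hk : 0 < ε / (2 * Δ) := div_pos hε (by linarith)
  have h1 : f b - g b ≤ Δ := (abs_le.1 hb).2
  have h2 : ε / (2 * Δ) * (f b - g b) ≤ ε / (2 * Δ) * Δ :=
    mul_le_mul_of_nonneg_left h1 hk.le
  have h3 : ε / (2 * Δ) * Δ = ε / 2 := by field_simp
  nlinarith

/-- STATEMENT 4 (exponential mechanism): if the objective functions `ξ_X` have finite
sensitivity `Δ_ξ` and the normalizing constants `c_X = ∫ exp((ε/(2Δ_ξ)) ξ_X) dν` are finite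
and strictly positive, then the mechanism with density proportional to
`exp((ε/(2Δ_ξ)) ξ_X)` with respect to ν satisfies ε-differential privacy. -/
theorem stmt_4 {Y 𝒳 : Type*} [MeasurableSpace Y] {n : ℕ} [DecidableEq 𝒳]
    (ν : Measure Y) (ε Δ : ℝ) (hε : 0 < ε) (hΔ : 0 < Δ)
    (ξ : (Fin n → 𝒳) → Y → ℝ) (hmeas : ∀ X, Measurable (ξ X))
    (hsens : ∀ X X' : Fin n → 𝒳, hammingDist X X' = 1 →
      ∀ᵐ b ∂ν, |ξ X b - ξ X' b| ≤ Δ)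
    (c : (Fin n → 𝒳) → ℝ≥0∞)
    (hc : ∀ X, c X = ∫⁻ b, ENNReal.ofReal (Real.exp (ε / (2 * Δ) * ξ X b)) ∂ν)
    (hcfin : ∀ X, c X ≠ ⊤) (hcpos : ∀ X, c X ≠ 0) :
    ∀ X X' : Fin n → 𝒳, hammingDist X X' = 1 →
      ∀ B : Set Y, MeasurableSet B →
        (c X)⁻¹ * ∫⁻ b in B, ENNReal.ofReal (Real.exp (ε / (2 * Δ) * ξ X b)) ∂ν ≤
          ENNReal.ofReal (Real.exp ε) *
            ((c X')⁻¹ * ∫⁻ b in B, ENNReal.ofReal (Real.exp (ε / (2 * Δ) * ξ X' b)) ∂ν) := by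
  intro X X' hXX' B hB
  set a : ℝ≥0∞ := ENNReal.ofReal (Real.exp (ε / 2)) with ha
  have ha0 : a ≠ 0 := by
    simpa [ha] using ENNReal.ofReal_pos.2 (Real.exp_pos (ε / 2)) |>.ne'
  have hatop : a ≠ ⊤ := ENNReal.ofReal_ne_top
  -- integral comparison on B
  have hI : (∫⁻ b in B, ENNReal.ofReal (Real.exp (ε / (2 * Δ) * ξ X b)) ∂ν)
      ≤ a * ∫⁻ b in B, ENNReal.ofReal (Real.exp (ε / (2 * Δ) * ξ X' b)) ∂ν := by
    rw [← lintegral_const_mul' _ _ hatop]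
    refine lintegral_mono_ae ?_
    exact ae_restrict_of_ae (exp_density_le ν ε Δ hε hΔ _ _ (hsens X X' hXX'))
  -- normalizing constant comparison
  have hC : c X' ≤ a * c X := by
    rw [hc X, hc X', ← lintegral_const_mul' _ _ hatop]
    refine lintegral_mono_ae ?_
    have h' := hsens X' X (by rwa [hammingDist_comm])
    exact exp_density_le ν ε Δ hε hΔ _ _ h'
  have hinv : (c X)⁻¹ ≤ a * (c X')⁻¹ := by
    have := ENNReal.inv_le_inv.2 hC
    rw [ENNReal.mul_inv (Or.inl ha0) (Or.inl hatop)] at this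
    calc (c X)⁻¹ = a * (a⁻¹ * (c X)⁻¹) := by
          rw [← mul_assoc, ENNReal.mul_inv_cancel ha0 hatop, one_mul]
      _ ≤ a * (c X')⁻¹ := mul_le_mul_right this a
  calc (c X)⁻¹ * ∫⁻ b in B, ENNReal.ofReal (Real.exp (ε / (2 * Δ) * ξ X b)) ∂ν
      ≤ (a * (c X')⁻¹) * (a * ∫⁻ b in B, ENNReal.ofReal (Real.exp (ε / (2 * Δ) * ξ X' b)) ∂ν) :=
        mul_le_mul' hinv hI
    _ = (a * a) * ((c X')⁻¹ * ∫⁻ b in B, ENNReal.ofReal (Real.exp (ε / (2 * Δ) * ξ X' b)) ∂ν) := by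
        ring
    _ = ENNReal.ofReal (Real.exp ε) *
          ((c X')⁻¹ * ∫⁻ b in B, ENNReal.ofReal (Real.exp (ε / (2 * Δ) * ξ X' b)) ∂ν) := by
        rw [ha, ← ENNReal.ofReal_mul (Real.exp_pos _).le, ← Real.exp_add]
        norm_num
end

section
/- (ε-DP of the exponential mechanism for functional PCA on H^k.) Let H be a real separable Hilbert space, let k < n be positive integers, let ε > 0, and let ν be a probability measure on H^k (in the paper, ν is the law of k i.i.d. mean-zero Gaussian processes on H with trace-class covariance operator Σ). For V = (V_1, …, V_k) ∈ H^k, let P_V denote the orthogonal projection of H onto the (finite-dimensional, hence closed) subspace span(V_1, …, V_k). For X ∈ H^n with ‖X_i‖ ≤ 1 for all i, define ξ_X(V) = Σ_{i=1}^n ‖P_V X_i‖², and assume V ↦ ξ_X(V) is ν-measurable for each X. Then the normalizing constant c_X = ∫_{H^k} exp((ε/2) ξ_X(V)) dν(V) satisfies 0 < c_X ≤ exp(εn/2) < ∞, and the family of probability measures μ_X(B) = c_X^{-1} ∫_B exp((ε/2) ξ_X(V)) dν(V), for X ranging over tuples in H^n with all entries of norm at most 1, satisfies ε-differential privacy: μ_X(B)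 ≤ exp(ε) · μ_{X'}(B) for all measurable B ⊆ H^k whenever X and X' differ in exactly one coordinate. -/
open MeasureTheory
open scoped ENNReal

/-- The orthogonal projection of a real Hilbert space onto the span of the (finitely many)
vectors `V 0, …, V (k-1)`, viewed as a map `H → H`. -/
noncomputable def projSpan {H : Type*} [NormedAddCommGroup H] [InnerProductSpace ℝ H]
    [CompleteSpace H] {k : ℕ} (V : Fin k → H) (x : H) : H :=
  haveI : FiniteDimensional ℝ (Submodule.span ℝ (Set.range V)) :=
    FiniteDimensional.span_of_finite ℝ (Set.finite_range V)
  (Submodule.orthogonalProjectionOnto (Submodule.span ℝ (Set.range V)) x : H)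

lemma projSpan_norm_le {H : Type*} [NormedAddCommGroup H] [InnerProductSpace ℝ H]
    [CompleteSpace H] {k : ℕ} (V : Fin k → H) (x : H) : ‖projSpan V x‖ ≤ ‖x‖ := by
  haveI : FiniteDimensional ℝ (Submodule.span ℝ (Set.range V)) :=
    FiniteDimensional.span_of_finite ℝ (Set.finite_range V)
  unfold projSpan
  calc ‖(Submodule.orthogonalProjectionOnto (Submodule.span ℝ (Set.range V)) x : H)‖
      ≤ ‖Submodule.orthogonalProjectionOnto (Submodule.span ℝ (Set.range V))‖ * ‖x‖ :=
        (Submodule.orthogonalProjectionOnto (Submodule.span ℝ (Set.range V))).le_opNorm x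
    _ ≤ 1 * ‖x‖ := by
        gcongr; exact Submodule.orthogonalProjectionOnto_norm_le _
    _ = ‖x‖ := one_mul _

section Aux

variable {H : Type*} [NormedAddCommGroup H] [InnerProductSpace ℝ H] [CompleteSpace H]
  {k n : ℕ}

lemma xi_nonneg (V : Fin k → H) (X : Fin n → H) :
    0 ≤ ∑ i, ‖projSpan V (X i)‖ ^ 2 :=
  Finset.sum_nonneg fun i _ => sq_nonneg _

lemma xi_le (V : Fin k → H) (X : Fin n → H) (hX : ∀ i, ‖X i‖ ≤ 1) :
    ∑ i, ‖projSpan V (X i)‖ ^ 2 ≤ (n : ℝ) := by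
  calc ∑ i, ‖projSpan V (X i)‖ ^ 2 ≤ ∑ _i : Fin n, (1 : ℝ) := by
        apply Finset.sum_le_sum
        intro i _
        have h := (projSpan_norm_le V (X i)).trans (hX i)
        calc ‖projSpan V (X i)‖ ^ 2 ≤ 1 ^ 2 := by gcongr
          _ = 1 := one_pow 2
    _ = (n : ℝ) := by simp

lemma xi_diff_le (V : Fin k → H) (X X' : Fin n → H) (hX : ∀ i, ‖X i‖ ≤ 1)
    (j : Fin n) (hj : ∀ i, i ≠ j → X i = X' i) :
    ∑ i, ‖projSpan V (X i)‖ ^ 2 ≤ (∑ i, ‖projSpan V (X' i)‖ ^ 2) + 1 := by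
  have : (∑ i, ‖projSpan V (X i)‖ ^ 2) - ∑ i, ‖projSpan V (X' i)‖ ^ 2
      = ∑ i, (‖projSpan V (X i)‖ ^ 2 - ‖projSpan V (X' i)‖ ^ 2) := by
    rw [Finset.sum_sub_distrib]
  have h2 : ∑ i, (‖projSpan V (X i)‖ ^ 2 - ‖projSpan V (X' i)‖ ^ 2)
      = ‖projSpan V (X j)‖ ^ 2 - ‖projSpan V (X' j)‖ ^ 2 := by
    apply Finset.sum_eq_single
    · intro i _ hij
      rw [hj i hij]; ring
    · intro h; exact absurd (Finset.mem_univ j) h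
  have h3 : ‖projSpan V (X j)‖ ^ 2 - ‖projSpan V (X' j)‖ ^ 2 ≤ 1 := by
    have h := (projSpan_norm_le V (X j)).trans (hX j)
    have h4 : ‖projSpan V (X j)‖ ^ 2 ≤ 1 := by
      calc ‖projSpan V (X j)‖ ^ 2 ≤ 1 ^ 2 := by gcongr
        _ = 1 := one_pow 2
    nlinarith [sq_nonneg ‖projSpan V (X' j)‖]
  linarith [this ▸ h2 ▸ h3, le_of_eq this, h2]

end Aux

/-- STATEMENT 11 (ε-DP of the exponential mechanism for functional PCA on `H^k`):
with `ξ_X(V) = ∑ᵢ ‖P_V X_i‖²` for databases `X` with entries of norm at most 1, the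
normalizing constants satisfy `0 < c_X ≤ exp(εn/2)`, and the mechanism with density
proportional to `exp((ε/2) ξ_X)` with respect to the base probability measure ν on `H^k`
satisfies ε-differential privacy. -/
theorem stmt_11 {H : Type*} [NormedAddCommGroup H] [InnerProductSpace ℝ H] [CompleteSpace H]
    [TopologicalSpace.SeparableSpace H] [DecidableEq H] [MeasurableSpace H] [BorelSpace H]
    {k n : ℕ} (hk : 0 < k) (hkn : k < n) (ε : ℝ) (hε : 0 < ε)
    (ν : Measure (Fin k → H)) [IsProbabilityMeasure ν]
    (hmeas : ∀ X : Fin n → H,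
      AEMeasurable (fun V : Fin k → H => ∑ i, ‖projSpan V (X i)‖ ^ 2) ν) :
    (∀ X : Fin n → H, (∀ i, ‖X i‖ ≤ 1) →
      0 < ∫⁻ V, ENNReal.ofReal (Real.exp (ε / 2 * ∑ i, ‖projSpan V (X i)‖ ^ 2)) ∂ν ∧
      ∫⁻ V, ENNReal.ofReal (Real.exp (ε / 2 * ∑ i, ‖projSpan V (X i)‖ ^ 2)) ∂ν ≤
        ENNReal.ofReal (Real.exp (ε * n / 2))) ∧
    (∀ X X' : Fin n → H, (∀ i, ‖X i‖ ≤ 1) → (∀ i, ‖X' i‖ ≤ 1) →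
      hammingDist X X' = 1 → ∀ B : Set (Fin k → H), MeasurableSet B →
      (∫⁻ V, ENNReal.ofReal (Real.exp (ε / 2 * ∑ i, ‖projSpan V (X i)‖ ^ 2)) ∂ν)⁻¹ *
          ∫⁻ V in B, ENNReal.ofReal (Real.exp (ε / 2 * ∑ i, ‖projSpan V (X i)‖ ^ 2)) ∂ν ≤
        ENNReal.ofReal (Real.exp ε) *
          ((∫⁻ V, ENNReal.ofReal (Real.exp (ε / 2 * ∑ i, ‖projSpan V (X' i)‖ ^ 2)) ∂ν)⁻¹ *
            ∫⁻ V in B,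
              ENNReal.ofReal (Real.exp (ε / 2 * ∑ i, ‖projSpan V (X' i)‖ ^ 2)) ∂ν)) := by
  -- abbreviations
  set c : ℝ≥0∞ := ENNReal.ofReal (Real.exp (ε / 2)) with hc
  have hc0 : c ≠ 0 := by
    simp [hc, ENNReal.ofReal_eq_zero, not_le, Real.exp_pos]
  have hctop : c ≠ ⊤ := ENNReal.ofReal_ne_top
  -- Part 1, stated as a helper
  have part1 : ∀ X : Fin n → H, (∀ i, ‖X i‖ ≤ 1) →
      0 < ∫⁻ V, ENNReal.ofReal (Real.exp (ε / 2 * ∑ i, ‖projSpan V (X i)‖ ^ 2)) ∂ν ∧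
      ∫⁻ V, ENNReal.ofReal (Real.exp (ε / 2 * ∑ i, ‖projSpan V (X i)‖ ^ 2)) ∂ν ≤
        ENNReal.ofReal (Real.exp (ε * n / 2)) := by
    intro X hX
    constructor
    · have h1 : (1 : ℝ≥0∞) ≤
          ∫⁻ V, ENNReal.ofReal (Real.exp (ε / 2 * ∑ i, ‖projSpan V (X i)‖ ^ 2)) ∂ν := by
        have : (1 : ℝ≥0∞) = ∫⁻ _ : Fin k → H, (1 : ℝ≥0∞) ∂ν := by
          simp [lintegral_const]
        rw [this]
        apply lintegral_mono
        intro V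
        have hnn : (0 : ℝ) ≤ ε / 2 * ∑ i, ‖projSpan V (X i)‖ ^ 2 :=
          mul_nonneg (by linarith) (xi_nonneg V X)
        have := Real.one_le_exp hnn
        calc (1 : ℝ≥0∞) = ENNReal.ofReal 1 := by simp
          _ ≤ ENNReal.ofReal (Real.exp (ε / 2 * ∑ i, ‖projSpan V (X i)‖ ^ 2)) :=
            ENNReal.ofReal_le_ofReal this
      exact lt_of_lt_of_le zero_lt_one h1
    · calc ∫⁻ V, ENNReal.ofReal (Real.exp (ε / 2 * ∑ i, ‖projSpan V (X i)‖ ^ 2)) ∂ν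
          ≤ ∫⁻ _ : Fin k → H, ENNReal.ofReal (Real.exp (ε * n / 2)) ∂ν := by
            apply lintegral_mono
            intro V
            apply ENNReal.ofReal_le_ofReal
            apply Real.exp_le_exp.2
            have := xi_le V X hX
            calc ε / 2 * ∑ i, ‖projSpan V (X i)‖ ^ 2 ≤ ε / 2 * n := by
                  apply mul_le_mul_of_nonneg_left this (by linarith)
              _ = ε * n / 2 := by ring
        _ = ENNReal.ofReal (Real.exp (ε * n / 2)) := by simp [lintegral_const]
  refine ⟨part1, ?_⟩
  intro X X' hX hX' hdist B hB
  -- extract the single differing coordinate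
  obtain ⟨j, hjset⟩ := Finset.card_eq_one.1 hdist
  have hj : ∀ i, i ≠ j → X i = X' i := by
    intro i hij
    by_contra hne
    have : i ∈ ({i : Fin n | X i ≠ X' i} : Finset (Fin n)) := by
      simp [hne]
    rw [hjset] at this
    exact hij (Finset.mem_singleton.1 this)
  have hj' : ∀ i, i ≠ j → X' i = X i := fun i hij => (hj i hij).symm
  -- pointwise comparison both ways
  have key : ∀ (Y Y' : Fin n → H), (∀ i, ‖Y i‖ ≤ 1) → (∀ i, i ≠ j → Y i = Y' i) →
      ∀ V : Fin k → H,
      ENNReal.ofReal (Real.exp (ε / 2 * ∑ i, ‖projSpan V (Y i)‖ ^ 2)) ≤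
        c * ENNReal.ofReal (Real.exp (ε / 2 * ∑ i, ‖projSpan V (Y' i)‖ ^ 2)) := by
    intro Y Y' hY hYj V
    rw [hc, ← ENNReal.ofReal_mul (Real.exp_pos _).le, ← Real.exp_add]
    apply ENNReal.ofReal_le_ofReal
    apply Real.exp_le_exp.2
    have := xi_diff_le V Y Y' hY j hYj
    nlinarith [this, hε]
  -- integral comparisons
  set IX := ∫⁻ V, ENNReal.ofReal (Real.exp (ε / 2 * ∑ i, ‖projSpan V (X i)‖ ^ 2)) ∂ν
  set IX' := ∫⁻ V, ENNReal.ofReal (Real.exp (ε / 2 * ∑ i, ‖projSpan V (X' i)‖ ^ 2)) ∂ν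
  have hIX := part1 X hX
  have hIX' := part1 X' hX'
  have hIXne : IX ≠ 0 := hIX.1.ne'
  have hIXtop : IX ≠ ⊤ := (hIX.2.trans_lt ENNReal.ofReal_lt_top).ne
  have hIX'ne : IX' ≠ 0 := hIX'.1.ne'
  have hIX'top : IX' ≠ ⊤ := (hIX'.2.trans_lt ENNReal.ofReal_lt_top).ne
  -- numerator bound
  have hnum : (∫⁻ V in B, ENNReal.ofReal (Real.exp (ε / 2 * ∑ i, ‖projSpan V (X i)‖ ^ 2)) ∂ν)
      ≤ c * ∫⁻ V in B, ENNReal.ofReal (Real.exp (ε / 2 * ∑ i, ‖projSpan V (X' i)‖ ^ 2)) ∂ν := by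
    rw [← lintegral_const_mul' _ _ hctop]
    exact lintegral_mono fun V => key X X' hX hj V
  -- denominator bound: IX' ≤ c * IX
  have hden : IX' ≤ c * IX :=
    (lintegral_mono fun V => key X' X hX' hj' V).trans_eq
      (lintegral_const_mul' _ _ hctop)
  have hinv : IX⁻¹ ≤ c * IX'⁻¹ := by
    calc IX⁻¹ = c * (c⁻¹ * IX⁻¹) := by
          rw [← mul_assoc, ENNReal.mul_inv_cancel hc0 hctop, one_mul]
      _ = c * (c * IX)⁻¹ := by rw [ENNReal.mul_inv (Or.inl hc0) (Or.inl hctop)]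
      _ ≤ c * IX'⁻¹ := by gcongr
  calc IX⁻¹ * ∫⁻ V in B, ENNReal.ofReal (Real.exp (ε / 2 * ∑ i, ‖projSpan V (X i)‖ ^ 2)) ∂ν
      ≤ (c * IX'⁻¹) *
        (c * ∫⁻ V in B, ENNReal.ofReal (Real.exp (ε / 2 * ∑ i, ‖projSpan V (X' i)‖ ^ 2)) ∂ν) :=
        mul_le_mul' hinv hnum
    _ = (c * c) * (IX'⁻¹ *
        ∫⁻ V in B, ENNReal.ofReal (Real.exp (ε / 2 * ∑ i, ‖projSpan V (X' i)‖ ^ 2)) ∂ν) := by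
        ring
    _ = ENNReal.ofReal (Real.exp ε) * (IX'⁻¹ *
        ∫⁻ V in B, ENNReal.ofReal (Real.exp (ε / 2 * ∑ i, ‖projSpan V (X' i)‖ ^ 2)) ∂ν) := by
        rw [hc, ← ENNReal.ofReal_mul (Real.exp_pos _).le, ← Real.exp_add]
        norm_num
end
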